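/- In a simplified market that has at most two legal allocations and in which every item is legal to at least two players, let O be a legal allocation and let C be a uniquely assigned cycle in the legality graph G(O). Then every player i has exactly 0 or exactly 2 legal items among the vertices of C, i.e., |V(C) ∩ 𝓛(i)| ∈ {0, 2}. -/

import Mathlib

open Finset

/-- A legal allocation of a simplified market: a partition of the items into bundles
`O i` with `|O i| = k i` and `O i ⊆ 𝓛 i` for every player `i`. -/
def LegalAlloc {X I : Type*} (k : I → ℕ) (L : I → Finset X) (O : I → Finset X) : Prop :=
  (∀ i, (O i).card = k i) ∧ (∀ x : X, ∃! i, x ∈ O i) ∧ (∀ i, O i ⊆ L i)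

/-- The edge relation of the legality graph `G(O)`: `x → y` iff some player `i`
has `x ∈ O i` and `y ∈ 𝓛 i ∖ O i`. -/
def LegalityEdge {X I : Type*} (L : I → Finset X) (O : I → Finset X) (x y : X) : Prop :=
  ∃ i, x ∈ O i ∧ y ∈ L i ∧ y ∉ O i

/-- In a simplified market with at most two legal allocations in which every item is
legal to at least two players, every player has exactly `0` or exactly `2` legal items
among the vertices of a uniquely assigned cycle of the legality graph. -/
theorem zero_or_two_legal_items_on_uniquely_assigned_cycle
    {X I : Type*} [Fintype X] [DecidableEq X] [Fintype I] [DecidableEq I]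
    (k : I → ℕ) (hk : ∀ i, 1 ≤ k i) (hsum : ∑ i, k i = Fintype.card X)
    (hI : 2 ≤ Fintype.card I)
    (L : I → Finset X)
    (htight : ∀ i, ∀ x ∈ L i, ∃ O : I → Finset X, LegalAlloc k L O ∧ x ∈ O i)
    (h2 : ∀ x : X, 2 ≤ (Finset.univ.filter (fun i => x ∈ L i)).card)
    (htwo : ∀ O₁ O₂ O₃ : I → Finset X,
      LegalAlloc k L O₁ → LegalAlloc k L O₂ → LegalAlloc k L O₃ →
      O₁ = O₂ ∨ O₁ = O₃ ∨ O₂ = O₃)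
    (O : I → Finset X) (hO : LegalAlloc k L O)
    (l : ℕ) (z : Fin (l + 1) → X)
    (hzinj : Function.Injective z)
    (hzedge : ∀ j, LegalityEdge L O (z j) (z (j + 1)))
    (hzua : ∀ i, (Finset.univ.filter (fun j : Fin (l + 1) => z j ∈ O i)).card ≤ 1) :
    ∀ i, (Finset.univ.filter (fun j : Fin (l + 1) => z j ∈ L i)).card = 0 ∨
      (Finset.univ.filter (fun j : Fin (l + 1) => z j ∈ L i)).card = 2 := by
  classical
  obtain ⟨hcard, hpart, hsub⟩ := hO
  -- the owner function
  have hex : ∀ j : Fin (l+1), ∃ i, z j ∈ O i := fun j => (hpart (z j)).exists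
  choose f hfz using hex
  have huniq : ∀ (j : Fin (l+1)) (i : I), z j ∈ O i → i = f j := by
    intro j i hi
    exact (hpart (z j)).unique hi (hfz j)
  have hfinj : Function.Injective f := by
    intro a b hab
    have ha : a ∈ Finset.univ.filter (fun j : Fin (l+1) => z j ∈ O (f a)) := by
      simp [hfz a]
    have hb : b ∈ Finset.univ.filter (fun j : Fin (l+1) => z j ∈ O (f a)) := by
      simp only [Finset.mem_filter, Finset.mem_univ, true_and, hab]
      exact hfz b
    exact Finset.card_le_one.mp (hzua (f a)) a ha b hb
  -- edge facts in terms of the owner function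
  have hnext : ∀ j : Fin (l+1), z (j+1) ∈ L (f j) ∧ z (j+1) ∉ O (f j) := by
    intro j
    obtain ⟨i, h1, h2', h3⟩ := hzedge j
    have hi : i = f j := huniq j i h1
    exact ⟨hi ▸ h2', hi ▸ h3⟩
  -- the rotated allocation
  set O' : I → Finset X := fun i =>
    ((O i).filter (fun x => ∀ j, z j ≠ x)) ∪
      ((Finset.univ.filter (fun j => f j = i)).image (fun j => z (j+1))) with hO'def
  have hmem : ∀ (i : I) (x : X),
      x ∈ O' i ↔ (x ∈ O i ∧ ∀ j, z j ≠ x) ∨ (∃ j, f j = i ∧ z (j+1) = x) := by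
    intro i x
    simp [hO'def, Finset.mem_union, Finset.mem_filter, Finset.mem_image]
  -- owner of a cycle vertex in O'
  have hmem_cycle : ∀ (m : Fin (l+1)) (i : I), z m ∈ O' i ↔ i = f (m - 1) := by
    intro m i
    rw [hmem]
    constructor
    · rintro (⟨_, hall⟩ | ⟨j, hji, hjm⟩)
      · exact absurd rfl (hall m)
      · have hjm' : j + 1 = m := hzinj hjm
        have hj : j = m - 1 := by
          rw [← hjm']; rw [add_sub_cancel_right]
        rw [← hji, hj]
    · rintro rfl
      exact Or.inr ⟨m - 1, rfl, by rw [sub_add_cancel]⟩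
  -- O' is a legal allocation
  have hO'legal : LegalAlloc k L O' := by
    refine ⟨?_, ?_, ?_⟩
    · intro i
      by_cases h : ∃ j, f j = i
      · obtain ⟨j, rfl⟩ := h
        have hset : O' (f j) = insert (z (j+1)) ((O (f j)).erase (z j)) := by
          ext x
          rw [hmem, Finset.mem_insert, Finset.mem_erase]
          constructor
          · rintro (⟨hx, hall⟩ | ⟨m, hm, rfl⟩)
            · exact Or.inr ⟨fun hxx => hall j hxx.symm, hx⟩
            · rw [hfinj hm]
              exact Or.inl rfl
          · rintro (rfl | ⟨hne, hx⟩)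
            · exact Or.inr ⟨j, rfl, rfl⟩
            · refine Or.inl ⟨hx, fun m hm => ?_⟩
              have : f j = f m := huniq m (f j) (hm ▸ hx)
              exact hne (by rw [← hm, hfinj this])
        rw [hset, Finset.card_insert_of_notMem, Finset.card_erase_of_mem (hfz j),
          hcard (f j)]
        · have := hk (f j); omega
        · intro hmem'
          exact (hnext j).2 (Finset.mem_of_mem_erase hmem')
      · have hset : O' i = O i := by
          ext x
          rw [hmem]
          constructor
          · rintro (⟨hx, _⟩ | ⟨m, hm, _⟩)
            · exact hx
            · exact absurd ⟨m, hm⟩ h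
          · intro hx
            refine Or.inl ⟨hx, fun m hm => h ⟨m, (huniq m i (hm ▸ hx)).symm⟩⟩
        rw [hset, hcard]
    · intro x
      by_cases h : ∃ m, z m = x
      · obtain ⟨m, rfl⟩ := h
        exact ⟨f (m - 1), (hmem_cycle m _).mpr rfl, fun i hi => (hmem_cycle m i).mp hi⟩
      · obtain ⟨i, hi, hiu⟩ := hpart x
        refine ⟨i, (hmem i x).mpr (Or.inl ⟨hi, fun m hm => h ⟨m, hm⟩⟩), fun i' hi' => ?_⟩
        rcases (hmem i' x).mp hi' with ⟨hx, _⟩ | ⟨m, _, hm⟩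
        · exact hiu i' hx
        · exact absurd ⟨m+1, hm⟩ h
    · intro i x hx
      rcases (hmem i x).mp hx with ⟨hx', _⟩ | ⟨m, hm, rfl⟩
      · exact hsub i hx'
      · exact hm ▸ (hnext m).1
  -- O ≠ O'
  have hne : O ≠ O' := by
    intro h
    have h1 : z (0 + 1 : Fin (l+1)) ∈ O' (f 0) :=
      (hmem (f 0) _).mpr (Or.inr ⟨0, rfl, rfl⟩)
    exact (hnext 0).2 (h ▸ h1)
  -- in any legal allocation, cycle vertex z m belongs to f m or f (m-1)
  have howner : ∀ (m : Fin (l+1)) (i : I) (A : I → Finset X),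
      LegalAlloc k L A → z m ∈ A i → i = f m ∨ i = f (m - 1) := by
    intro m i A hA hmA
    rcases htwo O O' A ⟨hcard, hpart, hsub⟩ hO'legal hA with h | h | h
    · exact absurd h hne
    · exact Or.inl (huniq m i (h ▸ hmA))
    · exact Or.inr ((hmem_cycle m i).mp (h ▸ hmA))
  -- j ≠ j + 1
  have hj_ne : ∀ j : Fin (l+1), j ≠ j + 1 := by
    intro j hj
    exact (hnext j).2 (hj ▸ hfz j)
  intro i
  by_cases h : ∃ j, f j = i
  · obtain ⟨j, rfl⟩ := h
    right
    have hTs : Finset.univ.filter (fun m : Fin (l+1) => z m ∈ L (f j)) = {j, j+1} := by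
      ext m
      simp only [Finset.mem_filter, Finset.mem_univ, true_and, Finset.mem_insert,
        Finset.mem_singleton]
      constructor
      · intro hm
        obtain ⟨A, hA, hmA⟩ := htight (f j) (z m) hm
        rcases howner m (f j) A hA hmA with h1 | h1
        · exact Or.inl (hfinj h1).symm
        · right
          have : m - 1 = j := (hfinj h1).symm
          rw [← this]; rw [sub_add_cancel]
      · rintro (hm | hm)
        · rw [hm]; exact hsub (f j) (hfz j)
        · rw [hm]; exact (hnext j).1
    rw [hTs, Finset.card_insert_of_notMem (by simpa using hj_ne j), Finset.card_singleton]
  · left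
    rw [Finset.card_eq_zero, Finset.filter_eq_empty_iff]
    intro m _
    intro hm
    obtain ⟨A, hA, hmA⟩ := htight i (z m) hm
    rcases howner m i A hA hmA with h1 | h1
    · exact h ⟨m, h1.symm⟩
    · exact h ⟨m - 1, h1.symm⟩
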